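/- Let f : ℝⁿ → ℝ be C² and satisfy the PL inequality with constant μ around a local minimum x̄ with value f* and solution set S. Then the rank of ∇²f is locally constant on S near x̄: rank ∇²f(x) = rank ∇²f(x̄) for all x ∈ S close enough to x̄. -/

import Mathlib

open Metric Filter Topology

local notation "⟪" x ", " y "⟫" => @inner ℝ _ _ x y

lemma spec_gap {n : ℕ} {μ : ℝ} (hμ : 0 < μ)
    (H : EuclideanSpace ℝ (Fin n) →L[ℝ] EuclideanSpace ℝ (Fin n))
    (hsymm : LinearMap.IsSymmetric (H : EuclideanSpace ℝ (Fin n) →ₗ[ℝ] EuclideanSpace ℝ (Fin n)))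
    (hpsd : ∀ v, 0 ≤ ⟪v, H v⟫)
    (hgap : ∀ v, ⟪v, H v⟫ ≤ μ⁻¹ * ‖H v‖ ^ 2) :
    ∀ w, μ * ‖H w‖ ^ 2 ≤ ⟪H w, H (H w)⟫ := by
  intro w
  have hn : Module.finrank ℝ (EuclideanSpace ℝ (Fin n)) = n := finrank_euclideanSpace_fin
  set b := hsymm.eigenvectorBasis hn with hb
  set lam := hsymm.eigenvalues hn with hlamdef
  have hsymm' : ∀ x y : EuclideanSpace ℝ (Fin n), ⟪H x, y⟫ = ⟪x, H y⟫ := fun x y => hsymm x y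
  have happ : ∀ i, H (b i) = lam i • b i := fun i => by
    have h := hsymm.apply_eigenvectorBasis hn i
    exact_mod_cast h
  have hunit : ∀ i, ⟪b i, b i⟫ = 1 := fun i => by
    rw [real_inner_self_eq_norm_sq, b.orthonormal.1 i]; norm_num
  have hlam0 : ∀ i, 0 ≤ lam i := fun i => by
    have h := hpsd (b i)
    rwa [happ i, real_inner_smul_right, hunit i, mul_one] at h
  have hlam : ∀ i, lam i = 0 ∨ μ ≤ lam i := by
    intro i
    rcases eq_or_lt_of_le (hlam0 i) with h | h
    · exact Or.inl h.symm
    · right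
      have h1 := hgap (b i)
      rw [happ i, real_inner_smul_right, hunit i, mul_one, norm_smul,
        b.orthonormal.1 i, mul_one, Real.norm_eq_abs, sq_abs] at h1
      -- lam i ≤ μ⁻¹ * lam i ^ 2
      have := mul_le_mul_of_nonneg_left h1 hμ.le
      rw [mul_inv_cancel_left₀ hμ.ne'] at this
      -- μ * lam i ≤ lam i ^ 2
      nlinarith
  set v := H w with hv
  have hc : ∀ i, ⟪b i, v⟫ = lam i * ⟪b i, w⟫ := fun i => by
    rw [hv, ← hsymm' (b i), happ i, real_inner_smul_left]
  have hci : ∀ i, lam i = 0 → ⟪b i, v⟫ = 0 := fun i h => by rw [hc i, h, zero_mul]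
  have hHv : ∀ i, ⟪b i, H v⟫ = lam i * ⟪b i, v⟫ := fun i => by
    rw [← hsymm' (b i), happ i, real_inner_smul_left]
  have e1 : ⟪v, H v⟫ = ∑ i, lam i * ⟪b i, v⟫ ^ 2 := by
    rw [← b.sum_inner_mul_inner v (H v)]
    refine Finset.sum_congr rfl fun i _ => ?_
    rw [hHv i, real_inner_comm v (b i)]; ring
  have e2 : ‖v‖ ^ 2 = ∑ i, ⟪b i, v⟫ ^ 2 := by
    rw [← real_inner_self_eq_norm_sq, ← b.sum_inner_mul_inner v v]
    refine Finset.sum_congr rfl fun i _ => ?_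
    rw [real_inner_comm v (b i)]; ring
  calc μ * ‖v‖ ^ 2 = ∑ i, μ * ⟪b i, v⟫ ^ 2 := by rw [e2, Finset.mul_sum]
    _ ≤ ∑ i, lam i * ⟪b i, v⟫ ^ 2 := by
        refine Finset.sum_le_sum fun i _ => ?_
        rcases hlam i with h | h
        · rw [hci i h]; ring_nf; simp [h]
        · exact mul_le_mul_of_nonneg_right h (sq_nonneg _)
    _ = ⟪v, H v⟫ := e1.symm

lemma slope_tendsto {E : Type*} [NormedAddCommGroup E] [NormedSpace ℝ E] {F : Type*}
    [NormedAddCommGroup F] [NormedSpace ℝ F]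
    {G : E → F} {x : E} (hG : DifferentiableAt ℝ G x) (hGx : G x = 0) (v : E) :
    Filter.Tendsto (fun t : ℝ => t⁻¹ • G (x + t • v)) (𝓝[≠] 0) (𝓝 (fderiv ℝ G x v)) := by
  have hline : HasDerivAt (fun t : ℝ => x + t • v) v 0 := by
    simpa using ((hasDerivAt_id (0 : ℝ)).smul_const v).const_add x
  have hfd : HasFDerivAt G (fderiv ℝ G x) ((fun t : ℝ => x + t • v) 0) := by
    simpa using hG.hasFDerivAt
  have h : HasDerivAt (fun t : ℝ => G (x + t • v)) (fderiv ℝ G x v) 0 :=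
    hfd.comp_hasDerivAt 0 hline
  have h2 := h.tendsto_slope_zero
  refine h2.congr fun t => ?_
  simp [hGx]

lemma quad_tendsto {n : ℕ} {f : EuclideanSpace ℝ (Fin n) → ℝ}
    (hf : ContDiff ℝ 2 f) {x : EuclideanSpace ℝ (Fin n)} (hx : gradient f x = 0)
    (v : EuclideanSpace ℝ (Fin n)) :
    Filter.Tendsto (fun t : ℝ => (f (x + t • v) - f x) / t ^ 2) (𝓝[≠] 0)
      (𝓝 (⟪v, fderiv ℝ (gradient f) x v⟫ / 2)) := by
  have hfdiff : Differentiable ℝ f := hf.differentiable (by norm_num)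
  have hG1 : ContDiff ℝ 1 (gradient f) := by
    have h1 : ContDiff ℝ 1 (fderiv ℝ f) := hf.fderiv_right (by norm_num)
    exact ((InnerProductSpace.toDual ℝ (EuclideanSpace ℝ (Fin n))).symm.contDiff).comp h1
  have hGdiff : DifferentiableAt ℝ (gradient f) x := (hG1.differentiable (by norm_num)) x
  have hff' : ∀ t : ℝ, HasDerivAt (fun s : ℝ => f (x + s • v) - f x)
      (⟪gradient f (x + t • v), v⟫) t := by
    intro t
    have hline : HasDerivAt (fun s : ℝ => x + s • v) v t := by
      simpa using ((hasDerivAt_id t).smul_const v).const_add x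
    have := ((hfdiff (x + t • v)).hasFDerivAt.comp_hasDerivAt t hline).sub_const (f x)
    convert this using 1
    have : ⟪gradient f (x + t • v), v⟫ = (fderiv ℝ f (x + t • v)) v :=
      InnerProductSpace.toDual_symm_apply
    exacts [rfl, rfl, rfl, InnerProductSpace.toDual_symm_apply]
  have hgg' : ∀ t : ℝ, HasDerivAt (fun s : ℝ => s ^ 2) (2 * t) t := by
    intro t; simpa using hasDerivAt_pow 2 t
  have hdiv : Filter.Tendsto (fun t : ℝ => ⟪gradient f (x + t • v), v⟫ / (2 * t)) (𝓝[≠] 0)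
      (𝓝 (⟪v, fderiv ℝ (gradient f) x v⟫ / 2)) := by
    have h1 := slope_tendsto hGdiff hx v
    have h2 : Filter.Tendsto (fun t : ℝ => ⟪t⁻¹ • gradient f (x + t • v), v⟫ / 2) (𝓝[≠] 0)
        (𝓝 (⟪fderiv ℝ (gradient f) x v, v⟫ / 2)) :=
      (h1.inner tendsto_const_nhds).div_const 2
    rw [real_inner_comm] at h2
    refine h2.congr' ?_
    filter_upwards [self_mem_nhdsWithin] with t ht
    rw [real_inner_smul_left]
    field_simp
  have hfa : Filter.Tendsto (fun s : ℝ => f (x + s • v) - f x) (𝓝[≠] 0) (𝓝 0) := by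
    apply tendsto_nhdsWithin_of_tendsto_nhds
    have hc : Continuous (fun s : ℝ => f (x + s • v) - f x) :=
      (hfdiff.continuous.comp (by continuity)).sub continuous_const
    have := hc.tendsto 0
    simpa using this
  have hga : Filter.Tendsto (fun s : ℝ => s ^ 2) (𝓝[≠] (0:ℝ)) (𝓝 0) := by
    apply tendsto_nhdsWithin_of_tendsto_nhds
    simpa using (continuous_pow 2).tendsto (0:ℝ)
  exact HasDerivAt.lhopital_zero_nhdsNE (.of_forall hff') (.of_forall hgg')
    (by filter_upwards [self_mem_nhdsWithin] with t ht; simpa using ht) hfa hga hdiv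

lemma key_ineq {n : ℕ} {f : EuclideanSpace ℝ (Fin n) → ℝ} {xb x : EuclideanSpace ℝ (Fin n)}
    (hf : ContDiff ℝ 2 f) {μ : ℝ} (hμ : 0 < μ) {ε : ℝ}
    (hball : ∀ y ∈ ball xb ε, f y - f xb ≤ (1 / (2 * μ)) * ‖gradient f y‖ ^ 2)
    (hx : x ∈ ball xb ε) (hxmin : IsLocalMin f x) (hfx : f x = f xb)
    (v : EuclideanSpace ℝ (Fin n)) :
    0 ≤ ⟪v, fderiv ℝ (gradient f) x v⟫ ∧
      ⟪v, fderiv ℝ (gradient f) x v⟫ ≤ μ⁻¹ * ‖fderiv ℝ (gradient f) x v‖ ^ 2 := by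
  have hGx : gradient f x = 0 := by
    have h := hxmin.fderiv_eq_zero
    show (InnerProductSpace.toDual ℝ (EuclideanSpace ℝ (Fin n))).symm (fderiv ℝ f x) = 0
    rw [h]; simp
  have hG1 : ContDiff ℝ 1 (gradient f) := by
    have h1 : ContDiff ℝ 1 (fderiv ℝ f) := hf.fderiv_right (by norm_num)
    exact ((InnerProductSpace.toDual ℝ (EuclideanSpace ℝ (Fin n))).symm.contDiff).comp h1
  have hGdiff : DifferentiableAt ℝ (gradient f) x := (hG1.differentiable (by norm_num)) x
  have ha := quad_tendsto hf hGx v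
  -- eventually x + t • v ∈ ball xb ε and nearby min
  have hline : Filter.Tendsto (fun t : ℝ => x + t • v) (𝓝 0) (𝓝 x) := by
    have : Continuous (fun t : ℝ => x + t • v) := by continuity
    simpa using this.tendsto 0
  constructor
  · -- PSD from local min
    have hev : ∀ᶠ t : ℝ in 𝓝[≠] 0, 0 ≤ (f (x + t • v) - f x) / t ^ 2 := by
      have hmem := hline.eventually hxmin
      filter_upwards [eventually_nhdsWithin_of_eventually_nhds hmem,
        self_mem_nhdsWithin] with t hmin ht
      have htne : t ≠ 0 := by simpa using ht
      have ht2 : (0:ℝ) < t ^ 2 := by positivity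
      exact div_nonneg (by simpa using sub_nonneg.mpr hmin) ht2.le
    have := le_of_tendsto_of_tendsto tendsto_const_nhds ha hev
    linarith
  · -- gap inequality from PL
    have hb' := slope_tendsto hGdiff hGx v
    have hb : Filter.Tendsto (fun t : ℝ => ‖gradient f (x + t • v)‖ ^ 2 / t ^ 2) (𝓝[≠] 0)
        (𝓝 (‖fderiv ℝ (gradient f) x v‖ ^ 2)) := by
      have h2 := (hb'.norm).pow 2
      refine h2.congr' ?_
      filter_upwards [self_mem_nhdsWithin] with t ht
      have htne : t ≠ 0 := by simpa using ht
      rw [norm_smul]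
      rw [mul_pow, norm_inv, Real.norm_eq_abs, inv_pow, sq_abs]; ring
    have hev : ∀ᶠ t : ℝ in 𝓝[≠] 0,
        (f (x + t • v) - f x) / t ^ 2
          ≤ (1 / (2 * μ)) * (‖gradient f (x + t • v)‖ ^ 2 / t ^ 2) := by
      have hmem : ∀ᶠ t : ℝ in 𝓝 0, x + t • v ∈ ball xb ε :=
        hline.eventually (isOpen_ball.eventually_mem hx)
      filter_upwards [eventually_nhdsWithin_of_eventually_nhds hmem,
        self_mem_nhdsWithin] with t hmemt ht
      have htne : t ≠ 0 := by simpa using ht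
      have ht2 : (0:ℝ) < t ^ 2 := by positivity
      have hp := hball _ hmemt
      rw [hfx]
      rw [div_le_iff₀ ht2]
      calc f (x + t • v) - f xb ≤ (1 / (2 * μ)) * ‖gradient f (x + t • v)‖ ^ 2 := hp
        _ = 1 / (2 * μ) * (‖gradient f (x + t • v)‖ ^ 2 / t ^ 2) * t ^ 2 := by
            field_simp
    have hle := le_of_tendsto_of_tendsto ha (hb.const_mul (1 / (2 * μ))) hev
    rw [div_le_iff₀ (by norm_num : (0:ℝ) < 2)] at hle
    calc ⟪v, fderiv ℝ (gradient f) x v⟫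
        ≤ 1 / (2 * μ) * ‖fderiv ℝ (gradient f) x v‖ ^ 2 * 2 := hle
      _ = μ⁻¹ * ‖fderiv ℝ (gradient f) x v‖ ^ 2 := by field_simp

lemma hess_symm {n : ℕ} {f : EuclideanSpace ℝ (Fin n) → ℝ} (hf : ContDiff ℝ 2 f)
    (x : EuclideanSpace ℝ (Fin n)) :
    ∀ u w : EuclideanSpace ℝ (Fin n),
      ⟪fderiv ℝ (gradient f) x u, w⟫ = ⟪u, fderiv ℝ (gradient f) x w⟫ := by
  have hsnd : IsSymmSndFDerivAt ℝ f x := hf.contDiffAt.isSymmSndFDerivAt (by norm_num)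
  have hf' : ContDiff ℝ 1 (fderiv ℝ f) := hf.fderiv_right (by norm_num)
  have hG1 : ContDiff ℝ 1 (gradient f) :=
    ((InnerProductSpace.toDual ℝ (EuclideanSpace ℝ (Fin n))).symm.contDiff).comp hf'
  have key : ∀ u w : EuclideanSpace ℝ (Fin n),
      ⟪w, fderiv ℝ (gradient f) x u⟫ = fderiv ℝ (fderiv ℝ f) x u w := by
    intro u w
    have h1 : HasFDerivAt (fun y => ⟪w, gradient f y⟫)
        ((innerSL ℝ w).comp (fderiv ℝ (gradient f) x)) x :=
      (innerSL ℝ w).hasFDerivAt.comp x ((hG1.differentiable (by norm_num)) x).hasFDerivAt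
    have h2 : HasFDerivAt (fun y => fderiv ℝ f y w)
        ((ContinuousLinearMap.apply ℝ ℝ w).comp (fderiv ℝ (fderiv ℝ f) x)) x :=
      (ContinuousLinearMap.apply ℝ ℝ w).hasFDerivAt.comp x
        ((hf'.differentiable (by norm_num)) x).hasFDerivAt
    have hEq : (fun y => ⟪w, gradient f y⟫) = (fun y => fderiv ℝ f y w) := by
      funext y
      rw [real_inner_comm]
      exact InnerProductSpace.toDual_symm_apply
    rw [hEq] at h1
    have := h1.unique h2
    calc ⟪w, fderiv ℝ (gradient f) x u⟫
        = ((innerSL ℝ w).comp (fderiv ℝ (gradient f) x)) u := rfl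
      _ = ((ContinuousLinearMap.apply ℝ ℝ w).comp (fderiv ℝ (fderiv ℝ f) x)) u := by rw [this]
      _ = fderiv ℝ (fderiv ℝ f) x u w := rfl
  intro u w
  calc ⟪fderiv ℝ (gradient f) x u, w⟫ = ⟪w, fderiv ℝ (gradient f) x u⟫ := real_inner_comm _ _
    _ = fderiv ℝ (fderiv ℝ f) x u w := key u w
    _ = fderiv ℝ (fderiv ℝ f) x w u := hsnd u w
    _ = ⟪u, fderiv ℝ (gradient f) x w⟫ := (key w u).symm


set_option synthInstance.maxHeartbeats 1000000 in
set_option maxHeartbeats 2000000 in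
/-- Under the PL inequality, the rank of the Hessian is locally constant along the
solution set `S` near `xb`. -/
theorem pl_hessian_rank_locally_constant {n : ℕ}
    (f : EuclideanSpace ℝ (Fin n) → ℝ) (xb : EuclideanSpace ℝ (Fin n))
    (hf : ContDiff ℝ 2 f) (hmin : IsLocalMin f xb)
    (μ : ℝ) (hμ : 0 < μ)
    (S : Set (EuclideanSpace ℝ (Fin n)))
    (hS : S = {y | IsLocalMin f y ∧ f y = f xb})
    (hPL : ∀ᶠ x in 𝓝 xb, f x - f xb ≤ (1 / (2 * μ)) * ‖gradient f x‖ ^ 2) :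
    ∀ᶠ x in 𝓝 xb, x ∈ S →
      Module.finrank ℝ (LinearMap.range ((fderiv ℝ (gradient f) x :
          EuclideanSpace ℝ (Fin n) →ₗ[ℝ] EuclideanSpace ℝ (Fin n)))) =
        Module.finrank ℝ (LinearMap.range ((fderiv ℝ (gradient f) xb :
          EuclideanSpace ℝ (Fin n) →ₗ[ℝ] EuclideanSpace ℝ (Fin n)))) := by
  classical
  have hG1 : ContDiff ℝ 1 (gradient f) := by
    have h1 : ContDiff ℝ 1 (fderiv ℝ f) := hf.fderiv_right (by norm_num)
    exact ((InnerProductSpace.toDual ℝ (EuclideanSpace ℝ (Fin n))).symm.contDiff).comp h1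
  have hHcont : Continuous (fun y => fderiv ℝ (gradient f) y) := hG1.continuous_fderiv (by norm_num)
  set Hb := fderiv ℝ (gradient f) xb with hHb
  set r := Module.finrank ℝ (LinearMap.range (Hb : EuclideanSpace ℝ (Fin n) →ₗ[ℝ] EuclideanSpace ℝ (Fin n))) with hrdef
  -- the PL ball
  rw [Metric.eventually_nhds_iff_ball] at hPL
  obtain ⟨ε, hε, hball⟩ := hPL
  -- eventually the Hessian is close in operator norm
  have hevn : ∀ᶠ x in 𝓝 xb, ‖fderiv ℝ (gradient f) x - Hb‖ < μ := by
    have h0 : Filter.Tendsto (fun x => ‖fderiv ℝ (gradient f) x - Hb‖) (𝓝 xb) (𝓝 0) := by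
      have h1 := (hHcont.tendsto xb).sub (tendsto_const_nhds (x := Hb))
      simpa [← hHb] using h1.norm
    exact h0.eventually_lt_const hμ
  -- preimages of a basis of the range of Hb
  obtain ⟨w, hw⟩ : ∃ w : Fin r → EuclideanSpace ℝ (Fin n),
      ∀ i, Hb (w i) = ((Module.finBasis ℝ (LinearMap.range (Hb : EuclideanSpace ℝ (Fin n) →ₗ[ℝ] EuclideanSpace ℝ (Fin n)))) i :
        EuclideanSpace ℝ (Fin n)) := by
    choose w hw using fun i : Fin r =>
      LinearMap.mem_range.mp ((Module.finBasis ℝ (LinearMap.range (Hb : EuclideanSpace ℝ (Fin n) →ₗ[ℝ] EuclideanSpace ℝ (Fin n)))) i).2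
    exact ⟨w, hw⟩
  have hli0 : LinearIndependent ℝ (fun i : Fin r =>
      ((Module.finBasis ℝ (LinearMap.range (Hb : EuclideanSpace ℝ (Fin n) →ₗ[ℝ] EuclideanSpace ℝ (Fin n)))) i : EuclideanSpace ℝ (Fin n))) :=
    (Module.finBasis ℝ (LinearMap.range (Hb : EuclideanSpace ℝ (Fin n) →ₗ[ℝ] EuclideanSpace ℝ (Fin n)))).linearIndependent.map'
      (LinearMap.range (Hb : EuclideanSpace ℝ (Fin n) →ₗ[ℝ] EuclideanSpace ℝ (Fin n))).subtype (Submodule.ker_subtype _)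
  have hliHb : LinearIndependent ℝ (fun i : Fin r => Hb (w i)) := by
    have : (fun i : Fin r => Hb (w i)) = fun i =>
        ((Module.finBasis ℝ (LinearMap.range (Hb : EuclideanSpace ℝ (Fin n) →ₗ[ℝ] EuclideanSpace ℝ (Fin n)))) i : EuclideanSpace ℝ (Fin n)) :=
      funext hw
    rw [this]; exact hli0
  -- eventually the images remain linearly independent
  have hΦcont : Continuous (fun x => fun i : Fin r => fderiv ℝ (gradient f) x (w i)) :=
    continuous_pi fun i =>
      (ContinuousLinearMap.apply ℝ (EuclideanSpace ℝ (Fin n)) (w i)).continuous.comp hHcont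
  have hevli : ∀ᶠ x in 𝓝 xb,
      LinearIndependent ℝ (fun i : Fin r => fderiv ℝ (gradient f) x (w i)) :=
    (hΦcont.tendsto xb).eventually (isOpen_setOf_linearIndependent.eventually_mem hliHb)
  filter_upwards [ball_mem_nhds xb hε, hevn, hevli] with x hx1 hx2 hx3 hxS
  obtain ⟨hxmin, hxfx⟩ : IsLocalMin f x ∧ f x = f xb := by rw [hS] at hxS; exact hxS
  set H := fderiv ℝ (gradient f) x with hHdef
  -- lower bound on the rank
  have hge : r ≤ Module.finrank ℝ (LinearMap.range (H : EuclideanSpace ℝ (Fin n) →ₗ[ℝ] EuclideanSpace ℝ (Fin n))) := by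
    have h1 : Module.finrank ℝ
        (Submodule.span ℝ (Set.range (fun i : Fin r => H (w i)))) = r := by
      rw [finrank_span_eq_card hx3, Fintype.card_fin]
    have h2 : Submodule.span ℝ (Set.range fun i : Fin r => H (w i)) ≤ LinearMap.range (H : EuclideanSpace ℝ (Fin n) →ₗ[ℝ] EuclideanSpace ℝ (Fin n)) := by
      rw [Submodule.span_le]; rintro _ ⟨i, rfl⟩; exact LinearMap.mem_range_self (H : EuclideanSpace ℝ (Fin n) →ₗ[ℝ] EuclideanSpace ℝ (Fin n)) (w i)
    rw [← h1]
    exact Submodule.finrank_mono h2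
  -- upper bound on the rank
  have hle : Module.finrank ℝ (LinearMap.range (H : EuclideanSpace ℝ (Fin n) →ₗ[ℝ] EuclideanSpace ℝ (Fin n))) ≤ r := by
    by_contra hcon
    push_neg at hcon
    have hsym := hess_symm hf x
    have hKI := fun v => key_ineq hf hμ hball hx1 hxmin hxfx v
    have hspec := spec_gap hμ H (fun u v => hsym u v) (fun v => (hKI v).1) (fun v => (hKI v).2)
    have hrn : r + Module.finrank ℝ (LinearMap.ker (Hb : EuclideanSpace ℝ (Fin n) →ₗ[ℝ] EuclideanSpace ℝ (Fin n))) = n := by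
      have h := LinearMap.finrank_range_add_finrank_ker
        (Hb : EuclideanSpace ℝ (Fin n) →ₗ[ℝ] EuclideanSpace ℝ (Fin n))
      rwa [finrank_euclideanSpace_fin] at h
    have hne : LinearMap.range (H : EuclideanSpace ℝ (Fin n) →ₗ[ℝ] EuclideanSpace ℝ (Fin n)) ⊓ LinearMap.ker (Hb : EuclideanSpace ℝ (Fin n) →ₗ[ℝ] EuclideanSpace ℝ (Fin n)) ≠ ⊥ := by
      intro hbot
      have h3 := Submodule.finrank_sup_add_finrank_inf_eq (LinearMap.range (H : EuclideanSpace ℝ (Fin n) →ₗ[ℝ] EuclideanSpace ℝ (Fin n)))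
        (LinearMap.ker (Hb : EuclideanSpace ℝ (Fin n) →ₗ[ℝ] EuclideanSpace ℝ (Fin n)))
      rw [hbot, finrank_bot, add_zero] at h3
      have hle' : Module.finrank ℝ
          ↥(LinearMap.range (H : EuclideanSpace ℝ (Fin n) →ₗ[ℝ] EuclideanSpace ℝ (Fin n)) ⊔ LinearMap.ker (Hb : EuclideanSpace ℝ (Fin n) →ₗ[ℝ] EuclideanSpace ℝ (Fin n))) ≤ n := by
        have h4 := Submodule.finrank_le (LinearMap.range (H : EuclideanSpace ℝ (Fin n) →ₗ[ℝ] EuclideanSpace ℝ (Fin n)) ⊔ LinearMap.ker (Hb : EuclideanSpace ℝ (Fin n) →ₗ[ℝ] EuclideanSpace ℝ (Fin n)))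
        rwa [finrank_euclideanSpace_fin] at h4
      omega
    obtain ⟨v, hvmem, hvne⟩ := Submodule.exists_mem_ne_zero_of_ne_bot hne
    obtain ⟨hvr, hvk⟩ := Submodule.mem_inf.mp hvmem
    obtain ⟨u, hu⟩ := LinearMap.mem_range.mp hvr
    have h1 : μ * ‖v‖ ^ 2 ≤ ⟪v, H v⟫ := by rw [← hu]; exact hspec u
    have hbv : Hb v = 0 := LinearMap.mem_ker.mp hvk
    have h2 : ⟪v, H v⟫ ≤ ‖H - Hb‖ * ‖v‖ ^ 2 := by
      have hHv : H v = (H - Hb) v := by rw [ContinuousLinearMap.sub_apply, hbv, sub_zero]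
      rw [hHv]
      calc ⟪v, (H - Hb) v⟫ ≤ ‖v‖ * ‖(H - Hb) v‖ := real_inner_le_norm _ _
        _ ≤ ‖v‖ * (‖H - Hb‖ * ‖v‖) := by
            gcongr
            exact (H - Hb).le_opNorm v
        _ = ‖H - Hb‖ * ‖v‖ ^ 2 := by ring
    have hv0 : 0 < ‖v‖ := norm_pos_iff.mpr hvne
    have h3 : ‖H - Hb‖ * ‖v‖ ^ 2 < μ * ‖v‖ ^ 2 :=
      mul_lt_mul_of_pos_right hx2 (pow_pos hv0 2)
    linarith
  exact le_antisymm hle hge
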